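/- Suppose for each P ∈ P there exists an event A with P(A) ≥ 1 − δ_P and E^P[E·1_A] ≤ 1 + ε_P. Then E is an (ε,δ)-approximate e-variable: E^P[min(E, t)] ≤ 1 + ε_P + δ_P·t for all t ≥ 0 and all P ∈ P. -/

import Mathlib

open MeasureTheory
open scoped ENNReal

/-- Direction (E2) ⇒ (E1): if for each `P ∈ Unv` there is an event `A` with `P(A) ≥ 1 − δ_P` and
`E^P[E·1_A] ≤ 1 + ε_P`, then `E` is an `(ε,δ)`-approximate e-variable:
`E^P[min(E, t)] ≤ 1 + ε_P + δ_P·t` for all `t ≥ 0` and `P ∈ Unv`. -/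
theorem approx_e_of_event {Ω : Type*} [MeasurableSpace Ω] (Unv : Set (Measure Ω))
    (hprob : ∀ P ∈ Unv, IsProbabilityMeasure P)
    (ε δ : Measure Ω → ℝ)
    (hε : ∀ P ∈ Unv, 0 ≤ ε P) (hδ : ∀ P ∈ Unv, 0 ≤ δ P ∧ δ P ≤ 1)
    (E : Ω → ℝ≥0∞)
    (hyp : ∀ P ∈ Unv, ∃ A : Set Ω, MeasurableSet A ∧
      1 - ENNReal.ofReal (δ P) ≤ P A ∧
      ∫⁻ ω in A, E ω ∂P ≤ 1 + ENNReal.ofReal (ε P)) :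
    ∀ P ∈ Unv, ∀ t : ℝ, 0 ≤ t →
      ∫⁻ ω, min (E ω) (ENNReal.ofReal t) ∂P ≤
        1 + ENNReal.ofReal (ε P) + ENNReal.ofReal (δ P) * ENNReal.ofReal t := by
  intro P hP t ht
  obtain ⟨A, hA, hPA, hEA⟩ := hyp P hP
  haveI := hprob P hP
  have hδ1 : ENNReal.ofReal (δ P) ≤ 1 := by
    simpa using ENNReal.ofReal_le_ofReal (hδ P hP).2
  have hcompl : P Aᶜ ≤ ENNReal.ofReal (δ P) := by
    rw [measure_compl hA (measure_ne_top P A), measure_univ, tsub_le_iff_left]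
    calc (1 : ℝ≥0∞) = 1 - ENNReal.ofReal (δ P) + ENNReal.ofReal (δ P) :=
          (tsub_add_cancel_of_le hδ1).symm
      _ ≤ P A + ENNReal.ofReal (δ P) := add_le_add_left hPA _
  calc ∫⁻ ω, min (E ω) (ENNReal.ofReal t) ∂P
      = (∫⁻ ω in A, min (E ω) (ENNReal.ofReal t) ∂P)
        + ∫⁻ ω in Aᶜ, min (E ω) (ENNReal.ofReal t) ∂P :=
        (lintegral_add_compl _ hA).symm
    _ ≤ (∫⁻ ω in A, E ω ∂P) + ∫⁻ ω in Aᶜ, ENNReal.ofReal t ∂P :=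
        add_le_add (lintegral_mono fun ω => min_le_left _ _)
          (lintegral_mono fun ω => min_le_right _ _)
    _ ≤ (1 + ENNReal.ofReal (ε P)) + ENNReal.ofReal t * P Aᶜ := by
        rw [setLIntegral_const]
        exact add_le_add_left hEA _
    _ ≤ 1 + ENNReal.ofReal (ε P) + ENNReal.ofReal (δ P) * ENNReal.ofReal t := by
        rw [mul_comm]
        exact add_le_add_right (mul_le_mul_left hcompl _) _
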